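/- Let (S,T) be a self-adjoint bi-free central limit pair with φ(S)=φ(T)=0, φ(S²)=φ(T²)=1, φ(ST)=φ(TS)=c ∈ (−1,1). Then for all n,m ≥ 0: φ(SⁿTᵐS) = ∑_{i=0}^{n−1} φ(SⁱTᵐ)φ(S^{n−i−1}) + c∑_{j=0}^{m−1} φ(SⁿTʲ)φ(T^{m−j−1}), and φ(SⁿTᵐT) = c∑_{i=0}^{n−1} φ(SⁱTᵐ)φ(S^{n−i−1}) + ∑_{j=0}^{m−1} φ(SⁿTʲ)φ(T^{m−j−1}). Consequently φ(SⁿTᵐ·(1−c²)^{−1}(S−cT)) = ∑_{i=0}^{n−1} φ(SⁱTᵐ)φ(S^{n−i−1}), i.e. ξ = (1−c²)^{−1}(S−cT) is the left bi-free conjugate variable of S. -/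

import Mathlib

open Finset


open Finset

private lemma tri_swap (N : ℕ) (G : ℕ → ℕ → ℝ) :
    ∑ j ∈ range N, ∑ t ∈ range (N - (j+1)), G j ((j+1)+t) =
    ∑ t ∈ range N, ∑ s ∈ range t, G s t := by
  have h1 : ∀ j, ∑ t ∈ range (N - (j+1)), G j ((j+1)+t) = ∑ t ∈ Ico (j+1) N, G j t := by
    intro j
    rw [Finset.sum_Ico_eq_sum_range]
  simp_rw [h1]
  rw [range_eq_Ico, Finset.sum_Ico_Ico_comm']
  simp only [← range_eq_Ico]

private lemma backrec (c : ℝ) (M : List Bool → ℝ) (hM0 : M [] = 1)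
    (hMrec : ∀ (a : Bool) (w : List Bool),
      M (a :: w) = ∑ j ∈ range w.length,
        (if w[j]? = some a then (1 : ℝ) else c) * M (w.take j) * M (w.drop (j+1))) :
    ∀ (w : List Bool) (a : Bool),
      M (w ++ [a]) = ∑ j ∈ range w.length,
        (if w[j]? = some a then (1 : ℝ) else c) * M (w.take j) * M (w.drop (j+1)) := by
  suffices H : ∀ (n : ℕ) (w : List Bool), w.length ≤ n → ∀ a,
      M (w ++ [a]) = ∑ j ∈ range w.length,
        (if w[j]? = some a then (1 : ℝ) else c) * M (w.take j) * M (w.drop (j+1)) from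
    fun w a => H w.length w le_rfl a
  intro n
  induction n with
  | zero =>
    intro w hw a
    rw [List.length_eq_zero_iff.mp (Nat.le_zero.mp hw)]
    simp [hMrec a []]
  | succ n ih =>
    intro w hw a
    match w with
    | [] => simp [hMrec a []]
    | b :: v =>
      have hv : v.length ≤ n := by simpa using hw
      set G : ℕ → ℕ → ℝ := fun s u =>
        (if v[s]? = some b then (1 : ℝ) else c) * M (v.take s) *
          ((if v[u]? = some a then (1 : ℝ) else c) *
            M ((v.drop (s+1)).take (u - (s+1))) * M (v.drop (u+1))) with hG
      -- LHS
      have hL : M ((b :: v) ++ [a]) =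
          (∑ j ∈ range v.length, ∑ t ∈ range (v.length - (j+1)), G j ((j+1)+t))
          + (if a = b then (1:ℝ) else c) * M v := by
        rw [List.cons_append, hMrec b (v ++ [a])]
        rw [List.length_append, List.length_singleton, Finset.sum_range_succ]
        congr 1
        · refine Finset.sum_congr rfl fun j hj => ?_
          have hjv : j < v.length := Finset.mem_range.mp hj
          rw [List.getElem?_append_left hjv, List.take_append_of_le_length hjv.le,
            List.drop_append_of_le_length (by omega),
            ih (v.drop (j+1)) (by simp; omega) a]
          rw [Finset.mul_sum]
          rw [List.length_drop]
          refine Finset.sum_congr rfl fun t ht => ?_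
          have htv : t < v.length - (j+1) := Finset.mem_range.mp ht
          rw [hG]
          simp only [List.getElem?_drop, List.drop_drop]
          have e1 : (j+1) + t - (j+1) = t := by omega
          have e2 : (j+1) + (t+1) = ((j+1)+t) + 1 := by omega
          rw [e1, e2]
        · rw [List.getElem?_append_right le_rfl]
          simp [hM0]
      -- RHS
      have hR : (∑ j ∈ range (b :: v).length,
            (if (b :: v)[j]? = some a then (1 : ℝ) else c) *
              M ((b :: v).take j) * M ((b :: v).drop (j+1))) =
          (∑ t ∈ range v.length, ∑ s ∈ range t, G s t)
          + (if a = b then (1:ℝ) else c) * M v := by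
        rw [List.length_cons, Finset.sum_range_succ']
        congr 1
        · refine Finset.sum_congr rfl fun t ht => ?_
          have htv : t < v.length := Finset.mem_range.mp ht
          simp only [List.getElem?_cons_succ, List.take_succ_cons, List.drop_succ_cons]
          rw [hMrec b (v.take t), List.length_take, min_eq_left htv.le]
          rw [Finset.mul_sum, Finset.sum_mul]
          refine Finset.sum_congr rfl fun s hs => ?_
          have hst : s < t := Finset.mem_range.mp hs
          rw [hG]
          rw [List.getElem?_take_of_lt hst, List.take_take, min_eq_left (by omega : s ≤ t),
            List.drop_take]
          ring
        · simp only [List.getElem?_cons_zero, List.take_zero, List.drop_succ_cons,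
            List.drop_zero, hM0]
          by_cases hab : a = b <;> simp [hab, Option.some_inj]
          · intro h; exact absurd h.symm hab
      rw [hL, hR, tri_swap]


private lemma eval_sum (c : ℝ) (M : List Bool → ℝ) (n m : ℕ) (a : Bool) :
    ∑ j ∈ range (n+m),
      (if (List.replicate n true ++ List.replicate m false)[j]? = some a then (1:ℝ) else c) *
        M ((List.replicate n true ++ List.replicate m false).take j) *
        M ((List.replicate n true ++ List.replicate m false).drop (j+1))
    = (if a = true then (1:ℝ) else c) *
        ∑ j ∈ range n,
          M (List.replicate j true) * M (List.replicate (n-j-1) true ++ List.replicate m false)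
      + (if a = false then (1:ℝ) else c) *
        ∑ k ∈ range m,
          M (List.replicate n true ++ List.replicate k false) * M (List.replicate (m-k-1) false) := by
  have hlen : (List.replicate n true : List Bool).length = n := List.length_replicate
  rw [range_eq_Ico, ← Finset.sum_Ico_consecutive _ (Nat.zero_le n) (Nat.le_add_right n m)]
  congr 1
  · rw [Nat.Ico_zero_eq_range, Finset.mul_sum]
    refine Finset.sum_congr rfl fun j hj => ?_
    have hjn : j < n := Finset.mem_range.mp hj
    rw [List.getElem?_append_left (by omega), List.getElem?_replicate_of_lt hjn,
      List.take_append_of_le_length (by omega), List.take_replicate,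
      List.drop_append_of_le_length (by omega), List.drop_replicate]
    rw [show min j n = j by omega, show n - (j+1) = n - j - 1 by omega]
    cases a <;> (simp; try ring)
  · rw [Finset.sum_Ico_eq_sum_range, Nat.add_sub_cancel_left, Finset.mul_sum]
    refine Finset.sum_congr rfl fun k hk => ?_
    have hkm : k < m := Finset.mem_range.mp hk
    rw [List.getElem?_append_right (by omega), hlen,
      show n + k - n = k by omega, List.getElem?_replicate_of_lt hkm]
    rw [show n + k = (List.replicate n true : List Bool).length + k by rw [hlen],
      List.take_append, List.take_replicate]
    rw [show (List.replicate n true : List Bool).length + k + 1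
        = (List.replicate n true : List Bool).length + (k+1) by omega,
      List.drop_append, List.drop_replicate]
    simp only [hlen, Nat.add_sub_cancel_left, List.take_replicate, List.drop_replicate,
      show min (n+k) n = n by omega, show n - (n+(k+1)) = 0 by omega, List.replicate_zero,
      List.nil_append, show min k m = k by omega, show m - (k+1) = m - k - 1 by omega]
    cases a <;> (simp; try ring)


/-- Moment formulas for a self-adjoint bi-free central limit pair `(S,T)` with
`φ(S²)=φ(T²)=1` and `φ(ST)=φ(TS)=c ∈ (−1,1)`.  The joint moments are encoded by
the function `M` on words over `Bool` (`true` = `S`, `false` = `T`), arranged in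
the bi-non-crossing (`χ`-)order (lefts in increasing position order, then rights
in decreasing position order), so that `M` satisfies the Gaussian non-crossing
pairing recursion: `M([]) = 1` and
`M(a::w) = ∑ⱼ cov(a,wⱼ)·M(w_{<j})·M(w_{>j})` with `cov(a,b) = 1` if `a = b`
and `c` otherwise.  Then, with `μ n m = φ(SⁿTᵐ)`:
`φ(SⁿTᵐS) = ∑_{i<n} φ(SⁱTᵐ)φ(S^{n−i−1}) + c ∑_{j<m} φ(SⁿTʲ)φ(T^{m−j−1})`,
`φ(SⁿTᵐT) = c ∑_{i<n} φ(SⁱTᵐ)φ(S^{n−i−1}) + ∑_{j<m} φ(SⁿTʲ)φ(T^{m−j−1})`,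
and consequently
`φ(SⁿTᵐ·(1−c²)⁻¹(S−cT)) = ∑_{i<n} φ(SⁱTᵐ)φ(S^{n−i−1})`, i.e.
`ξ = (1−c²)⁻¹(S−cT)` is the left bi-free conjugate variable of `S`. -/
theorem stmt5 (c : ℝ) (hc : -1 < c ∧ c < 1) (M : List Bool → ℝ)
    (hM0 : M [] = 1)
    (hMrec : ∀ (a : Bool) (w : List Bool),
      M (a :: w) = ∑ j ∈ range w.length,
        (if w[j]? = some a then (1 : ℝ) else c) * M (w.take j) * M (w.drop (j+1))) :
    ∀ n m : ℕ,
      (M (List.replicate n true ++ true :: List.replicate m false) =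
        ∑ i ∈ range n,
          M (List.replicate i true ++ List.replicate m false) * M (List.replicate (n-i-1) true)
        + c * ∑ j ∈ range m,
          M (List.replicate n true ++ List.replicate j false) * M (List.replicate (m-j-1) false)) ∧
      (M (List.replicate n true ++ false :: List.replicate m false) =
        c * ∑ i ∈ range n,
          M (List.replicate i true ++ List.replicate m false) * M (List.replicate (n-i-1) true)
        + ∑ j ∈ range m,
          M (List.replicate n true ++ List.replicate j false) * M (List.replicate (m-j-1) false)) ∧
      ((1 - c^2)⁻¹ * (M (List.replicate n true ++ true :: List.replicate m false)
          - c * M (List.replicate n true ++ false :: List.replicate m false)) =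
        ∑ i ∈ range n,
          M (List.replicate i true ++ List.replicate m false) * M (List.replicate (n-i-1) true)) := by
  intro n m
  have S1def : (∑ j ∈ range n, M (List.replicate j true) *
        M (List.replicate (n - j - 1) true ++ List.replicate m false)) =
      ∑ i ∈ range n,
        M (List.replicate i true ++ List.replicate m false) * M (List.replicate (n - i - 1) true) := by
    rw [← Finset.sum_range_reflect
      (fun i => M (List.replicate i true ++ List.replicate m false) *
        M (List.replicate (n - i - 1) true)) n]
    refine Finset.sum_congr rfl fun j hj => ?_
    have hj' := Finset.mem_range.mp hj
    rw [show n - (n - 1 - j) - 1 = j from by omega, show n - 1 - j = n - j - 1 from by omega]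
    ring
  have key1 : M (List.replicate n true ++ true :: List.replicate m false) =
      (∑ i ∈ range n,
        M (List.replicate i true ++ List.replicate m false) * M (List.replicate (n-i-1) true))
      + c * ∑ j ∈ range m,
        M (List.replicate n true ++ List.replicate j false) * M (List.replicate (m-j-1) false) := by
    have e : List.replicate n true ++ true :: List.replicate m false =
        true :: (List.replicate n true ++ List.replicate m false) := by
      rw [List.append_cons, ← List.replicate_succ', List.replicate_succ, List.cons_append]
    rw [e, hMrec true]
    simp only [List.length_append, List.length_replicate]
    rw [eval_sum c M n m true, S1def]
    norm_num
  have key2 : M (List.replicate n true ++ false :: List.replicate m false) =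
      c * (∑ i ∈ range n,
        M (List.replicate i true ++ List.replicate m false) * M (List.replicate (n-i-1) true))
      + ∑ j ∈ range m,
        M (List.replicate n true ++ List.replicate j false) * M (List.replicate (m-j-1) false) := by
    have e : List.replicate n true ++ false :: List.replicate m false =
        (List.replicate n true ++ List.replicate m false) ++ [false] := by
      rw [show (false :: List.replicate m false : List Bool) =
          List.replicate m false ++ [false] from by rw [← List.replicate_succ, List.replicate_succ'],
        ← List.append_assoc]
    rw [e, backrec c M hM0 hMrec]
    simp only [List.length_append, List.length_replicate]
    rw [eval_sum c M n m false, S1def]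
    norm_num
  refine ⟨key1, key2, ?_⟩
  rw [key1, key2]
  have h1 : (1 : ℝ) - c ^ 2 ≠ 0 := by nlinarith [hc.1, hc.2]
  field_simp
  ring
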